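/- Let D < 0 be real, let V : ℝ → ℝ be continuous with V(X) ≥ 0 for all X, let P > 0, and let φ₁, φ₂ : ℝ → ℂ be twice continuously differentiable P-periodic functions, not both identically zero, satisfying φ₁'' + D·φ₁ − V·(2φ₁ + φ₂) = i·Λ·φ₁ and φ₂'' + D·φ₂ − V·(φ₁ + 2φ₂) = −i·Λ·φ₂ on ℝ for some Λ ∈ ℂ. Then Λ is purely imaginary: Re(Λ) = 0. -/

import Mathlib

open MeasureTheory intervalIntegral Complex Set

lemma auxNDPI_reg {f : ℝ → ℂ} (hf : ContDiff ℝ 2 f) :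
    Differentiable ℝ f ∧ Differentiable ℝ (deriv f) ∧ Continuous (deriv (deriv f)) := by
  have h2 : ContDiff ℝ (1 + 1) f := by exact_mod_cast hf
  rw [contDiff_succ_iff_deriv] at h2
  obtain ⟨hdiff, -, hf1⟩ := h2
  rw [contDiff_one_iff_deriv] at hf1
  exact ⟨hdiff, hf1.1, hf1.2⟩

lemma auxNDPI_per_deriv {f : ℝ → ℂ} {P : ℝ} (hper : ∀ x, f (x + P) = f x) (x : ℝ) :
    deriv f (x + P) = deriv f x := by
  have h : (fun y => f (y + P)) = f := funext hper
  rw [← deriv_comp_add_const, h]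

lemma auxNDPI_conj_cont {f : ℝ → ℂ} (hf : Continuous f) :
    Continuous fun x => (starRingEnd ℂ) (f x) := by
  simp only [starRingEnd_apply]; exact hf.star

lemma auxNDPI_ibp {f : ℝ → ℂ} {P : ℝ} (hf : ContDiff ℝ 2 f) (hper : ∀ x, f (x + P) = f x) :
    ∫ x in (0:ℝ)..P, deriv (deriv f) x * (starRingEnd ℂ) (f x)
      = -∫ x in (0:ℝ)..P, ((Complex.normSq (deriv f x) : ℝ) : ℂ) := by
  obtain ⟨hd0, hd1, hc2⟩ := auxNDPI_reg hf
  have hc0 : Continuous f := hd0.continuous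
  have hc1 : Continuous (deriv f) := hd1.continuous
  have hvd : ∀ x : ℝ, HasDerivAt (fun y => (starRingEnd ℂ) (f y)) ((starRingEnd ℂ) (deriv f x)) x := by
    intro x
    simp only [starRingEnd_apply]
    exact ((hd0 x).hasDerivAt).star
  have key := intervalIntegral.integral_deriv_mul_eq_sub_of_hasDerivAt
    (a := (0:ℝ)) (b := P)
    (u := deriv f) (v := fun x => (starRingEnd ℂ) (f x))
    (u' := deriv (deriv f)) (v' := fun x => (starRingEnd ℂ) (deriv f x))
    hc1.continuousOn (auxNDPI_conj_cont hc0).continuousOn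
    (fun x _ => (hd1 x).hasDerivAt) (fun x _ => hvd x)
    (hc2.intervalIntegrable 0 P) ((auxNDPI_conj_cont hc1).intervalIntegrable 0 P)
  have hz : deriv f P * (starRingEnd ℂ) (f P) - deriv f 0 * (starRingEnd ℂ) (f 0) = 0 := by
    have h1 : deriv f P = deriv f 0 := by simpa using auxNDPI_per_deriv hper 0
    have h2 : f P = f 0 := by simpa using hper 0
    rw [h1, h2, sub_self]
  rw [hz] at key
  rw [intervalIntegral.integral_add
    (f := fun x => deriv (deriv f) x * (starRingEnd ℂ) (f x))
    (g := fun x => deriv f x * (starRingEnd ℂ) (deriv f x))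
    ((hc2.mul (auxNDPI_conj_cont hc0)).intervalIntegrable 0 P)
    ((hc1.mul (auxNDPI_conj_cont hc1)).intervalIntegrable 0 P)] at key
  have h2 : (∫ x in (0:ℝ)..P, deriv f x * (starRingEnd ℂ) (deriv f x))
      = ∫ x in (0:ℝ)..P, ((Complex.normSq (deriv f x) : ℝ) : ℂ) := by
    apply intervalIntegral.integral_congr
    intro x _
    exact Complex.mul_conj _
  rw [h2] at key
  exact eq_neg_of_add_eq_zero_left key

theorem negative_D_implies_purely_imaginary_eigenvalue
    (D : ℝ) (hD : D < 0) (V : ℝ → ℝ) (hVcont : Continuous V) (hVpos : ∀ X, 0 ≤ V X)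
    (P : ℝ) (hP : 0 < P) (φ₁ φ₂ : ℝ → ℂ)
    (hφ₁ : ContDiff ℝ 2 φ₁) (hφ₂ : ContDiff ℝ 2 φ₂)
    (hper₁ : ∀ X : ℝ, φ₁ (X + P) = φ₁ X) (hper₂ : ∀ X : ℝ, φ₂ (X + P) = φ₂ X)
    (hnz : ¬(φ₁ = 0 ∧ φ₂ = 0)) (Λ : ℂ)
    (heq : ∀ X : ℝ,
      deriv (deriv φ₁) X + (D : ℂ) * φ₁ X - (V X : ℂ) * (2 * φ₁ X + φ₂ X)
          = Complex.I * Λ * φ₁ X ∧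
      deriv (deriv φ₂) X + (D : ℂ) * φ₂ X - (V X : ℂ) * (φ₁ X + 2 * φ₂ X)
          = -(Complex.I * Λ * φ₂ X)) :
    Λ.re = 0 := by
  classical
  obtain ⟨hd10, hd11, hdd1⟩ := auxNDPI_reg hφ₁
  obtain ⟨hd20, hd21, hdd2⟩ := auxNDPI_reg hφ₂
  have hc1 : Continuous φ₁ := hd10.continuous
  have hc2 : Continuous φ₂ := hd20.continuous
  have hcd1 : Continuous (deriv φ₁) := hd11.continuous
  have hcd2 : Continuous (deriv φ₂) := hd21.continuous
  set n₁ : ℝ → ℝ := fun x => Complex.normSq (φ₁ x) with hn₁def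
  set n₂ : ℝ → ℝ := fun x => Complex.normSq (φ₂ x) with hn₂def
  set r : ℝ → ℝ := fun x => 2 * (φ₂ x * (starRingEnd ℂ) (φ₁ x)).re with hrdef
  have hcn₁ : Continuous n₁ := Complex.continuous_normSq.comp hc1
  have hcn₂ : Continuous n₂ := Complex.continuous_normSq.comp hc2
  have hcr : Continuous r :=
    continuous_const.mul (Complex.continuous_re.comp (hc2.mul (auxNDPI_conj_cont hc1)))
  set K₁ : ℝ := ∫ x in (0:ℝ)..P, Complex.normSq (deriv φ₁ x) with hK₁def
  set K₂ : ℝ := ∫ x in (0:ℝ)..P, Complex.normSq (deriv φ₂ x) with hK₂def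
  set I₁ : ℝ := ∫ x in (0:ℝ)..P, n₁ x with hI₁def
  set I₂ : ℝ := ∫ x in (0:ℝ)..P, n₂ x with hI₂def
  set W₁ : ℝ := ∫ x in (0:ℝ)..P, V x * n₁ x with hW₁def
  set W₂ : ℝ := ∫ x in (0:ℝ)..P, V x * n₂ x with hW₂def
  set M : ℝ := ∫ x in (0:ℝ)..P, V x * r x with hMdef
  -- pointwise identity
  have hpt : ∀ x : ℝ,
      deriv (deriv φ₁) x * (starRingEnd ℂ) (φ₁ x)
      + deriv (deriv φ₂) x * (starRingEnd ℂ) (φ₂ x)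
      + (D:ℂ) * ((n₁ x : ℝ) : ℂ) + (D:ℂ) * ((n₂ x : ℝ) : ℂ)
      - 2 * ((V x * n₁ x : ℝ) : ℂ) - 2 * ((V x * n₂ x : ℝ) : ℂ)
      - ((V x * r x : ℝ) : ℂ)
      = Complex.I * Λ * ((n₁ x - n₂ x : ℝ) : ℂ) := by
    intro x
    have h1 := (heq x).1
    have h2 := (heq x).2
    have e1 : φ₁ x * (starRingEnd ℂ) (φ₁ x) = ((n₁ x : ℝ) : ℂ) := Complex.mul_conj _
    have e2 : φ₂ x * (starRingEnd ℂ) (φ₂ x) = ((n₂ x : ℝ) : ℂ) := Complex.mul_conj _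
    have e3 : φ₂ x * (starRingEnd ℂ) (φ₁ x) + φ₁ x * (starRingEnd ℂ) (φ₂ x)
        = ((r x : ℝ) : ℂ) := by
      have hcc : (starRingEnd ℂ) (φ₂ x * (starRingEnd ℂ) (φ₁ x))
          = φ₁ x * (starRingEnd ℂ) (φ₂ x) := by
        rw [map_mul, Complex.conj_conj]; ring
      rw [← hcc, Complex.add_conj]
    push_cast
    push_cast at e1 e2 e3
    linear_combination (starRingEnd ℂ) (φ₁ x) * h1 + (starRingEnd ℂ) (φ₂ x) * h2
      + (-(D:ℂ) + 2*(V x:ℂ) + Complex.I*Λ) * e1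
      + (-(D:ℂ) + 2*(V x:ℂ) - Complex.I*Λ) * e2
      + (V x : ℂ) * e3
  -- integrability of the complex pieces
  have i1 : IntervalIntegrable (fun x => deriv (deriv φ₁) x * (starRingEnd ℂ) (φ₁ x))
      MeasureTheory.volume 0 P := (hdd1.mul (auxNDPI_conj_cont hc1)).intervalIntegrable 0 P
  have i2 : IntervalIntegrable (fun x => deriv (deriv φ₂) x * (starRingEnd ℂ) (φ₂ x))
      MeasureTheory.volume 0 P := (hdd2.mul (auxNDPI_conj_cont hc2)).intervalIntegrable 0 P
  have i3 : IntervalIntegrable (fun x => (D:ℂ) * ((n₁ x : ℝ) : ℂ))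
      MeasureTheory.volume 0 P :=
    (continuous_const.mul (Complex.continuous_ofReal.comp hcn₁)).intervalIntegrable 0 P
  have i4 : IntervalIntegrable (fun x => (D:ℂ) * ((n₂ x : ℝ) : ℂ))
      MeasureTheory.volume 0 P :=
    (continuous_const.mul (Complex.continuous_ofReal.comp hcn₂)).intervalIntegrable 0 P
  have i5 : IntervalIntegrable (fun x => (2:ℂ) * ((V x * n₁ x : ℝ) : ℂ))
      MeasureTheory.volume 0 P :=
    (continuous_const.mul (Complex.continuous_ofReal.comp (hVcont.mul hcn₁))).intervalIntegrable 0 P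
  have i6 : IntervalIntegrable (fun x => (2:ℂ) * ((V x * n₂ x : ℝ) : ℂ))
      MeasureTheory.volume 0 P :=
    (continuous_const.mul (Complex.continuous_ofReal.comp (hVcont.mul hcn₂))).intervalIntegrable 0 P
  have i7 : IntervalIntegrable (fun x => ((V x * r x : ℝ) : ℂ))
      MeasureTheory.volume 0 P :=
    (Complex.continuous_ofReal.comp (hVcont.mul hcr)).intervalIntegrable 0 P
  -- the integrated identity
  have hint : (∫ x in (0:ℝ)..P,
        (deriv (deriv φ₁) x * (starRingEnd ℂ) (φ₁ x)
        + deriv (deriv φ₂) x * (starRingEnd ℂ) (φ₂ x)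
        + (D:ℂ) * ((n₁ x : ℝ) : ℂ) + (D:ℂ) * ((n₂ x : ℝ) : ℂ)
        - 2 * ((V x * n₁ x : ℝ) : ℂ) - 2 * ((V x * n₂ x : ℝ) : ℂ)
        - ((V x * r x : ℝ) : ℂ)))
      = Complex.I * Λ * ((I₁ - I₂ : ℝ) : ℂ) := by
    have hcongr : (∫ x in (0:ℝ)..P,
        (deriv (deriv φ₁) x * (starRingEnd ℂ) (φ₁ x)
        + deriv (deriv φ₂) x * (starRingEnd ℂ) (φ₂ x)
        + (D:ℂ) * ((n₁ x : ℝ) : ℂ) + (D:ℂ) * ((n₂ x : ℝ) : ℂ)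
        - 2 * ((V x * n₁ x : ℝ) : ℂ) - 2 * ((V x * n₂ x : ℝ) : ℂ)
        - ((V x * r x : ℝ) : ℂ)))
        = ∫ x in (0:ℝ)..P, Complex.I * Λ * ((n₁ x - n₂ x : ℝ) : ℂ) :=
      intervalIntegral.integral_congr (fun x _ => hpt x)
    rw [hcongr, intervalIntegral.integral_const_mul]
    congr 1
    have : (fun x => ((n₁ x - n₂ x : ℝ) : ℂ)) = fun x => (((n₁ x - n₂ x : ℝ) : ℝ) : ℂ) := rfl
    rw [intervalIntegral.integral_ofReal]
    norm_cast
    rw [intervalIntegral.integral_sub (hcn₁.intervalIntegrable 0 P) (hcn₂.intervalIntegrable 0 P)]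
  -- split the left-hand side
  rw [intervalIntegral.integral_sub (((((i1.add i2).add i3).add i4).sub i5).sub i6) i7,
      intervalIntegral.integral_sub ((((i1.add i2).add i3).add i4).sub i5) i6,
      intervalIntegral.integral_sub (((i1.add i2).add i3).add i4) i5,
      intervalIntegral.integral_add ((i1.add i2).add i3) i4,
      intervalIntegral.integral_add (i1.add i2) i3,
      intervalIntegral.integral_add i1 i2] at hint
  rw [auxNDPI_ibp hφ₁ hper₁, auxNDPI_ibp hφ₂ hper₂] at hint
  simp only [intervalIntegral.integral_const_mul, intervalIntegral.integral_ofReal] at hint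
  -- now hint is a complex identity in the real scalars
  have hmain : ((-K₁ - K₂ + D*(I₁+I₂) - 2*W₁ - 2*W₂ - M : ℝ) : ℂ)
      = Complex.I * Λ * ((I₁ - I₂ : ℝ) : ℂ) := by
    rw [← hint]; push_cast; ring
  -- extract real and imaginary parts
  have him : Λ.re * (I₁ - I₂) = 0 := by
    have := congrArg Complex.im hmain
    simpa [Complex.mul_im, Complex.mul_re] using this.symm
  have hre : (-K₁ - K₂ + D*(I₁+I₂) - 2*W₁ - 2*W₂ - M) = -(Λ.im * (I₁ - I₂)) := by
    have := congrArg Complex.re hmain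
    simpa [Complex.mul_re, Complex.mul_im] using this
  -- nonnegativity facts
  have hK₁nn : 0 ≤ K₁ := intervalIntegral.integral_nonneg hP.le
    (fun x _ => Complex.normSq_nonneg _)
  have hK₂nn : 0 ≤ K₂ := intervalIntegral.integral_nonneg hP.le
    (fun x _ => Complex.normSq_nonneg _)
  have hW₁nn : 0 ≤ W₁ := intervalIntegral.integral_nonneg hP.le
    (fun x _ => mul_nonneg (hVpos x) (Complex.normSq_nonneg _))
  have hW₂nn : 0 ≤ W₂ := intervalIntegral.integral_nonneg hP.le
    (fun x _ => mul_nonneg (hVpos x) (Complex.normSq_nonneg _))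
  -- M ≥ -(W₁ + W₂)
  have hMlb : -(W₁ + W₂) ≤ M := by
    have hle : ∀ x ∈ Set.Icc (0:ℝ) P, -(V x * n₁ x + V x * n₂ x) ≤ V x * r x := by
      intro x _
      have key : 0 ≤ r x + (n₁ x + n₂ x) := by
        have h := Complex.normSq_add (φ₂ x) (φ₁ x)
        have h0 := Complex.normSq_nonneg (φ₂ x + φ₁ x)
        simp only [hrdef, hn₁def, hn₂def]
        nlinarith [h, h0]
      nlinarith [mul_nonneg (hVpos x) key, hVpos x]
    have := intervalIntegral.integral_mono_on (μ := MeasureTheory.volume) hP.le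
      (((hVcont.mul hcn₁).add (hVcont.mul hcn₂)).neg.intervalIntegrable 0 P)
      ((hVcont.mul hcr).intervalIntegrable 0 P) hle
    simp only [Pi.neg_apply, Pi.add_apply, Pi.mul_apply] at this
    rw [intervalIntegral.integral_neg,
      intervalIntegral.integral_add (f := fun x => V x * n₁ x) (g := fun x => V x * n₂ x)
        ((hVcont.mul hcn₁).intervalIntegrable 0 P)
        ((hVcont.mul hcn₂).intervalIntegrable 0 P)] at this
    exact this
  -- I₁ + I₂ > 0
  have hIpos : 0 < I₁ + I₂ := by
    have hx0 : ∃ x, φ₁ x ≠ 0 ∨ φ₂ x ≠ 0 := by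
      by_contra h
      push_neg at h
      exact hnz ⟨funext fun x => (h x).1, funext fun x => (h x).2⟩
    obtain ⟨x₀, hx₀⟩ := hx0
    have hgper : Function.Periodic (fun x => n₁ x + n₂ x) P := by
      intro x; simp only [hn₁def, hn₂def, hper₁ x, hper₂ x]
    obtain ⟨y, hy, hxy⟩ := hgper.exists_mem_Ico₀ hP x₀
    have hpos : 0 < n₁ y + n₂ y := by
      rw [← hxy]
      rcases hx₀ with h | h
      · have h1 : 0 < n₁ x₀ := Complex.normSq_pos.mpr h
        have h2 : 0 ≤ n₂ x₀ := Complex.normSq_nonneg _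
        linarith
      · have h1 : 0 < n₂ x₀ := Complex.normSq_pos.mpr h
        have h2 : 0 ≤ n₁ x₀ := Complex.normSq_nonneg _
        linarith
    have := intervalIntegral.integral_pos hP ((hcn₁.add hcn₂).continuousOn)
      (fun x _ => add_nonneg (Complex.normSq_nonneg _) (Complex.normSq_nonneg _))
      ⟨y, ⟨hy.1, hy.2.le⟩, hpos⟩
    simp only [Pi.add_apply] at this
    rwa [intervalIntegral.integral_add (hcn₁.intervalIntegrable 0 P)
      (hcn₂.intervalIntegrable 0 P)] at this
  -- conclude
  have hRneg : -K₁ - K₂ + D*(I₁+I₂) - 2*W₁ - 2*W₂ - M < 0 := by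
    nlinarith [mul_neg_of_neg_of_pos hD hIpos]
  have hne : I₁ - I₂ ≠ 0 := by
    intro h
    rw [h, mul_zero, neg_zero] at hre
    linarith
  rcases mul_eq_zero.mp him with h | h
  · exact h
  · exact absurd h hne
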